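/- Let p ≥ 2, Q_2(z) = Π_{l=1}^p (z - ζ_l), Q_1(z)/Q_2(z) = Σ_l a_l/(z - ζ_l) with a_l > 0, and suppose S of degree n and V of degree p-2 satisfy Q_2 S'' + Q_1 S' + V S = 0. Then every zero of V and every zero of S lies in the convex hull of {ζ_1,…,ζ_p}. -/

import Mathlib

open Polynomial


lemma pkb_re_mul_inv (u z : ℂ) :
    (u * z⁻¹).re = ((starRingEnd ℂ) u * z).re / Complex.normSq z := by
  simp [Complex.mul_re, Complex.inv_re, Complex.inv_im, Complex.conj_re, Complex.conj_im,
    div_eq_mul_inv]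
  ring

lemma pkb_sep {K : Set ℂ} (hconv : Convex ℝ K) (hcomp : IsCompact K) (hne : K.Nonempty)
    {e : ℂ} (he : e ∉ K) :
    ∃ u : ℂ, (∀ k ∈ K, 0 < (u * (e - k)⁻¹).re) ∧
      (∀ w : ℂ, Metric.infDist w K ≤ Metric.infDist e K → 0 ≤ (u * (e - w)⁻¹).re) := by
  obtain ⟨q, hqK, hq⟩ := hcomp.exists_infDist_eq_dist hne e
  set u : ℂ := e - q with hu_def
  have hu : u ≠ 0 := sub_ne_zero.mpr (fun h => he (h ▸ hqK))
  have hnormSq_pos : 0 < Complex.normSq u := Complex.normSq_pos.mpr hu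
  -- obtuse angle property
  have hobtuse : ∀ k ∈ K, ((starRingEnd ℂ) u * (k - q)).re ≤ 0 := by
    intro k hk
    by_contra hpos
    push_neg at hpos
    set d : ℂ := k - q with hd_def
    set R : ℝ := ((starRingEnd ℂ) u * d).re with hR_def
    have hd : d ≠ 0 := by
      intro h
      rw [h] at hR_def
      simp [hR_def] at hpos
    have hD : 0 < Complex.normSq d := Complex.normSq_pos.mpr hd
    set t : ℝ := min 1 (R / Complex.normSq d) with ht_def
    have ht0 : 0 < t := lt_min one_pos (div_pos hpos hD)
    have ht1 : t ≤ 1 := min_le_left _ _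
    have htR : t * Complex.normSq d ≤ R := by
      have : t ≤ R / Complex.normSq d := min_le_right _ _
      calc t * Complex.normSq d ≤ (R / Complex.normSq d) * Complex.normSq d :=
            mul_le_mul_of_nonneg_right this hD.le
        _ = R := by field_simp
    have hz : q + (t : ℂ) * d ∈ K := by
      have := hconv hqK hk (by linarith : (0:ℝ) ≤ 1 - t) ht0.le (by ring)
      have heq2 : (1 - t) • q + t • k = q + (t : ℂ) * d := by
        simp only [hd_def, Complex.real_smul]
        push_cast
        ring
      rwa [heq2] at this
    have hdist : dist e q ≤ dist e (q + (t : ℂ) * d) := hq ▸ Metric.infDist_le_dist_of_mem hz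
    have hns : Complex.normSq (e - q) ≤ Complex.normSq (e - (q + (t : ℂ) * d)) := by
      rw [← Complex.sq_norm, ← Complex.sq_norm]
      have h1 : (0:ℝ) ≤ ‖e - q‖ := (norm_nonneg _)
      rw [← Complex.dist_eq, ← Complex.dist_eq]
      exact pow_le_pow_left₀ dist_nonneg hdist 2
    have hexp : e - (q + (t : ℂ) * d) = u - (t : ℂ) * d := by rw [hu_def]; ring
    rw [hexp] at hns
    have hRe : R = u.re * d.re + u.im * d.im := by
      simp [hR_def, Complex.mul_re, Complex.conj_re, Complex.conj_im]
      try ring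
    have hns' : Complex.normSq u ≤ Complex.normSq (u - (t:ℂ) * d) := hns
    have hcoord : Complex.normSq (u - (t:ℂ)*d)
        = Complex.normSq u - 2*t*R + t^2 * Complex.normSq d := by
      simp [Complex.normSq_apply, Complex.sub_re, Complex.sub_im, Complex.mul_re,
        Complex.mul_im, Complex.ofReal_re, Complex.ofReal_im, hRe]
      ring
    rw [hcoord] at hns'
    nlinarith
  refine ⟨u, ?_, ?_⟩
  · intro k hk
    have hek : e - k ≠ 0 := sub_ne_zero.mpr (fun h => he (h ▸ hk))
    rw [pkb_re_mul_inv]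
    apply div_pos _ (Complex.normSq_pos.mpr hek)
    have h1 : ((starRingEnd ℂ) u * (k - e)).re ≤ - Complex.normSq u := by
      have hsplit : k - e = (k - q) - u := by rw [hu_def]; ring
      rw [hsplit, mul_sub, Complex.sub_re]
      have h2 : ((starRingEnd ℂ) u * u).re = Complex.normSq u := by
        rw [← Complex.normSq_eq_conj_mul_self]; simp
      rw [h2]
      linarith [hobtuse k hk]
    have : ((starRingEnd ℂ) u * (e - k)).re = - ((starRingEnd ℂ) u * (k - e)).re := by
      rw [show (e - k) = -(k - e) by ring, mul_neg, Complex.neg_re]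
    linarith [this ▸ (by linarith : - ((starRingEnd ℂ) u * (k - e)).re ≥ Complex.normSq u)]
  · intro w hw
    by_cases hew : e = w
    · simp [← hew]
    have hewz : e - w ≠ 0 := sub_ne_zero.mpr hew
    rw [pkb_re_mul_inv]
    apply div_nonneg _ (Complex.normSq_nonneg _)
    obtain ⟨k₀, hk₀K, hk₀⟩ := hcomp.exists_infDist_eq_dist hne w
    have habs_u : ‖u‖ = Metric.infDist e K := by rw [hq, Complex.dist_eq]
    have hb1 : ((starRingEnd ℂ) u * (w - k₀)).re ≤ Complex.normSq u := by
      calc ((starRingEnd ℂ) u * (w - k₀)).re ≤ ‖(starRingEnd ℂ) u * (w - k₀)‖ :=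
            Complex.re_le_norm _
        _ = ‖u‖ * ‖w - k₀‖ := by rw [norm_mul, Complex.norm_conj]
        _ = ‖u‖ * Metric.infDist w K := by rw [hk₀, Complex.dist_eq]
        _ ≤ ‖u‖ * Metric.infDist e K :=
            mul_le_mul_of_nonneg_left hw (norm_nonneg _)
        _ = ‖u‖ * ‖u‖ := by rw [habs_u]
        _ = Complex.normSq u := by rw [← Complex.sq_norm]; ring
    have hb2 : ((starRingEnd ℂ) u * (k₀ - q)).re ≤ 0 := hobtuse k₀ hk₀K
    have hb3 : ((starRingEnd ℂ) u * (q - e)).re = - Complex.normSq u := by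
      have : q - e = -u := by rw [hu_def]; ring
      rw [this, mul_neg, Complex.neg_re, ← Complex.normSq_eq_conj_mul_self]
      simp
    have hsplit : (w - e) = (w - k₀) + (k₀ - q) + (q - e) := by ring
    have hle : ((starRingEnd ℂ) u * (w - e)).re ≤ 0 := by
      rw [hsplit, mul_add, mul_add, Complex.add_re, Complex.add_re, hb3]
      linarith
    have : ((starRingEnd ℂ) u * (e - w)).re = - ((starRingEnd ℂ) u * (w - e)).re := by
      rw [show (e - w) = -(w - e) by ring, mul_neg, Complex.neg_re]
    linarith [this]

lemma pkb_eval_derivative_multiset (c : ℂ) (e : ℂ) (s : Multiset ℂ) (h : ∀ w ∈ s, e ≠ w) :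
    eval e (derivative (C c * (s.map (fun w => X - C w)).prod)) =
      eval e (C c * (s.map (fun w => X - C w)).prod) * (s.map (fun w => (e - w)⁻¹)).sum := by
  induction s using Multiset.induction with
  | empty => simp
  | cons a s ih =>
    have ha : e ≠ a := h a (Multiset.mem_cons_self a s)
    have h' : ∀ w ∈ s, e ≠ w := fun w hw => h w (Multiset.mem_cons_of_mem hw)
    have hrw : C c * ((a ::ₘ s).map (fun w => X - C w)).prod
        = (X - C a) * (C c * (s.map (fun w => X - C w)).prod) := by
      rw [Multiset.map_cons, Multiset.prod_cons]; ring
    rw [hrw, derivative_mul, eval_add, eval_mul, eval_mul, eval_mul]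
    rw [ih h']
    simp only [derivative_sub, derivative_X, derivative_C, sub_zero, eval_one, eval_sub,
      eval_X, eval_C, Multiset.map_cons, Multiset.sum_cons]
    have hea : (e - a) ≠ 0 := sub_ne_zero.mpr ha
    simp only [eval_mul, eval_C, eval_sub, eval_X]
    field_simp

lemma pkb_eval_derivative (P : Polynomial ℂ) (hP : P ≠ 0) (z : ℂ) (hz : eval z P ≠ 0) :
    eval z (derivative P) = eval z P * (P.roots.map (fun w => (z - w)⁻¹)).sum := by
  have hsplit : P.roots.card = P.natDegree :=
    (Polynomial.splits_iff_card_roots).mp (IsAlgClosed.splits P)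
  have hfac := Polynomial.C_leadingCoeff_mul_prod_multiset_X_sub_C hsplit
  have hmem : ∀ w ∈ P.roots, z ≠ w := by
    intro w hw hzw
    exact hz (hzw ▸ (Polynomial.isRoot_of_mem_roots hw))
  calc eval z (derivative P)
      = eval z (derivative (C P.leadingCoeff * (P.roots.map (fun w => X - C w)).prod)) := by
        rw [hfac]
    _ = eval z (C P.leadingCoeff * (P.roots.map (fun w => X - C w)).prod) *
        (P.roots.map (fun w => (z - w)⁻¹)).sum := pkb_eval_derivative_multiset _ _ _ hmem
    _ = eval z P * (P.roots.map (fun w => (z - w)⁻¹)).sum := by rw [hfac]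

lemma pkb_gauss_lucas {P : Polynomial ℂ} (hd : derivative P ≠ 0) {K : Set ℂ}
    (hconv : Convex ℝ K) (hcomp : IsCompact K) (hne : K.Nonempty)
    (hroots : ∀ w ∈ P.roots, w ∈ K) {v : ℂ} (hv : eval v (derivative P) = 0) : v ∈ K := by
  by_contra hvK
  have hP : P ≠ 0 := fun h => hd (by simp [h])
  have hPv : eval v P ≠ 0 := by
    intro h
    exact hvK (hroots v ((Polynomial.mem_roots hP).mpr h))
  -- roots of P are nonempty
  have hdeg : 0 < P.natDegree := by
    by_contra hdeg
    push_neg at hdeg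
    have : P.natDegree = 0 := Nat.le_zero.mp hdeg
    exact hd (by rw [Polynomial.eq_C_of_natDegree_eq_zero this]; simp)
  obtain ⟨r, hr⟩ := Complex.exists_root (Polynomial.natDegree_pos_iff_degree_pos.mp hdeg)
  have hrmem : r ∈ P.roots := (Polynomial.mem_roots hP).mpr hr
  obtain ⟨u, hupos, _⟩ := pkb_sep hconv hcomp hne hvK
  have hsum : (P.roots.map (fun w => (v - w)⁻¹)).sum = 0 := by
    have := pkb_eval_derivative P hP v hPv
    rw [hv] at this
    exact (mul_eq_zero.mp this.symm).resolve_left hPv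
  have hmap : (u * (P.roots.map (fun w => (v - w)⁻¹)).sum) = 
      ((P.roots.map (fun w => u * (v - w)⁻¹)).sum) := by
    exact Multiset.sum_map_mul_left.symm
  have hre0 : ((P.roots.map (fun w => u * (v - w)⁻¹)).sum).re = 0 := by
    rw [← hmap, hsum, mul_zero, Complex.zero_re]
  have hre : ((P.roots.map (fun w => u * (v - w)⁻¹)).sum).re
      = ((P.roots.map (fun w => (u * (v - w)⁻¹).re)).sum) := by
    have h := map_multiset_sum Complex.reAddGroupHom (P.roots.map (fun w => u * (v - w)⁻¹))
    simpa [Multiset.map_map, Function.comp, Complex.coe_reAddGroupHom] using h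
  have hpos : 0 < ((P.roots.map (fun w => (u * (v - w)⁻¹).re)).sum) := by
    rw [← Multiset.cons_erase hrmem, Multiset.map_cons, Multiset.sum_cons]
    have h1 : 0 < (u * (v - r)⁻¹).re := hupos r (hroots r hrmem)
    have h2 : 0 ≤ ((Multiset.map (fun w => (u * (v - w)⁻¹).re) (P.roots.erase r)).sum) := by
      apply Multiset.sum_nonneg
      intro x hx
      obtain ⟨w, hw, rfl⟩ := Multiset.mem_map.mp hx
      exact (hupos w (hroots w (Multiset.mem_of_mem_erase hw))).le
    linarith
  rw [hre] at hre0
  linarith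

lemma pkb_pos_sum {p : ℕ} (hp : 1 ≤ p) (ζ : Fin p → ℂ) (a : Fin p → ℝ)
    (ha : ∀ l, 0 < a l) (u e : ℂ)
    (hζ : ∀ l, 0 < (u * (e - ζ l)⁻¹).re)
    (m : Multiset ℂ) (hm : ∀ w ∈ m, 0 ≤ (u * (e - w)⁻¹).re)
    (k : ℝ) (hk : 0 ≤ k)
    (h0 : (k : ℂ) * (m.map (fun w => (e - w)⁻¹)).sum
        + (∑ l, (a l : ℂ) * (e - ζ l)⁻¹) = 0) : False := by
  have hre0 : (u * ((k : ℂ) * (m.map (fun w => (e - w)⁻¹)).sum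
      + (∑ l, (a l : ℂ) * (e - ζ l)⁻¹))).re = 0 := by rw [h0, mul_zero, Complex.zero_re]
  have hterm1 : (u * ((k : ℂ) * (m.map (fun w => (e - w)⁻¹)).sum)).re
      = k * ((m.map (fun w => (u * (e - w)⁻¹).re)).sum) := by
    rw [show u * ((k : ℂ) * (m.map (fun w => (e - w)⁻¹)).sum)
        = (k : ℂ) * (u * (m.map (fun w => (e - w)⁻¹)).sum) by ring,
      Complex.re_ofReal_mul]
    congr 1
    rw [show u * (m.map (fun w => (e - w)⁻¹)).sum
        = ((m.map (fun w => u * (e - w)⁻¹)).sum) from Multiset.sum_map_mul_left.symm]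
    have h := map_multiset_sum Complex.reAddGroupHom (m.map (fun w => u * (e - w)⁻¹))
    simpa [Multiset.map_map, Function.comp, Complex.coe_reAddGroupHom] using h
  have hterm2 : (u * (∑ l, (a l : ℂ) * (e - ζ l)⁻¹)).re
      = ∑ l, (a l) * (u * (e - ζ l)⁻¹).re := by
    rw [Finset.mul_sum, Complex.re_sum]
    apply Finset.sum_congr rfl
    intro l _
    rw [show u * ((a l : ℂ) * (e - ζ l)⁻¹) = (a l : ℂ) * (u * (e - ζ l)⁻¹) by ring,
      Complex.re_ofReal_mul]
  rw [mul_add, Complex.add_re, hterm1, hterm2] at hre0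
  have h1 : 0 ≤ k * ((m.map (fun w => (u * (e - w)⁻¹).re)).sum) := by
    apply mul_nonneg hk
    apply Multiset.sum_nonneg
    intro x hx
    obtain ⟨w, hw, rfl⟩ := Multiset.mem_map.mp hx
    exact hm w hw
  have h2 : 0 < ∑ l, (a l) * (u * (e - ζ l)⁻¹).re := by
    apply Finset.sum_pos
    · intro l _
      exact mul_pos (ha l) (hζ l)
    · have : Nonempty (Fin p) := ⟨⟨0, hp⟩⟩
      exact Finset.univ_nonempty
  linarith

theorem polya_klein_bocher (p : ℕ) (hp : 2 ≤ p)
    (ζ : Fin p → ℂ) (a : Fin p → ℝ) (hapos : ∀ l, 0 < a l)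
    (n : ℕ) (S V : Polynomial ℂ)
    (hS : S.degree = (n : ℕ)) (hV : V.degree = ((p - 2 : ℕ) : ℕ))
    (heq : (∏ l, (X - C (ζ l))) * derivative (derivative S) +
        (∑ l, C (a l : ℂ) * ∏ j ∈ Finset.univ.erase l, (X - C (ζ j))) * derivative S +
        V * S = 0) :
    (∀ v ∈ V.roots, v ∈ convexHull ℝ (Set.range ζ)) ∧
      (∀ s ∈ S.roots, s ∈ convexHull ℝ (Set.range ζ)) := by
  classical
  have hp1 : 1 ≤ p := le_trans (by norm_num) hp
  set K : Set ℂ := convexHull ℝ (Set.range ζ) with hKdef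
  have hKconv : Convex ℝ K := convex_convexHull ℝ _
  have hKcomp : IsCompact K := (Set.finite_range ζ).isCompact_convexHull (𝕜 := ℝ)
  have hKclosed : IsClosed K := hKcomp.isClosed
  have hζK : ∀ l, ζ l ∈ K := fun l => subset_convexHull ℝ _ (Set.mem_range_self l)
  have hKne : K.Nonempty := ⟨ζ ⟨0, hp1⟩, hζK _⟩
  have hS0 : S ≠ 0 := by
    intro h
    rw [h, degree_zero] at hS
    exact absurd hS.symm (by simp)
  set Q₂ : Polynomial ℂ := ∏ l, (X - C (ζ l)) with hQ2def
  set Q₁ : Polynomial ℂ := ∑ l, C (a l : ℂ) * ∏ j ∈ Finset.univ.erase l, (X - C (ζ j))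
    with hQ1def
  have hQ₂ne : ∀ z : ℂ, (∀ l, z ≠ ζ l) → eval z Q₂ ≠ 0 := by
    intro z hz
    rw [hQ2def, eval_prod]
    apply Finset.prod_ne_zero_iff.mpr
    intro l _
    simp only [eval_sub, eval_X, eval_C]
    exact sub_ne_zero.mpr (hz l)
  have hQ1eval : ∀ z : ℂ, (∀ l, z ≠ ζ l) →
      eval z Q₁ = eval z Q₂ * ∑ l, ((a l : ℂ) * (z - ζ l)⁻¹) := by
    intro z hz
    rw [hQ1def, hQ2def, eval_finset_sum, Finset.mul_sum]
    apply Finset.sum_congr rfl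
    intro l _
    rw [eval_mul, eval_C, eval_prod, eval_prod]
    simp only [eval_sub, eval_X, eval_C]
    rw [← Finset.mul_prod_erase Finset.univ (fun j => z - ζ j) (Finset.mem_univ l)]
    have hzl : z - ζ l ≠ 0 := sub_ne_zero.mpr (hz l)
    field_simp
  -- exclude n = 0
  rcases Nat.eq_zero_or_pos n with hn0 | hn
  · exfalso
    have hdS : derivative S = 0 := by
      have hdeg0 : S.degree ≤ 0 := by rw [hS, hn0]; norm_num
      have hc : S = C (S.coeff 0) := Polynomial.eq_C_of_degree_le_zero hdeg0
      rw [hc]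
      simp
    rw [hdS] at heq
    simp only [derivative_zero, mul_zero, zero_add] at heq
    rcases mul_eq_zero.mp heq with hV0 | hS0'
    · rw [hV0, degree_zero] at hV
      exact absurd hV.symm (by simp)
    · exact hS0 hS0'
  have hnat : S.natDegree = n := natDegree_eq_of_degree_eq_some hS
  have hd : derivative S ≠ 0 := by
    intro h
    have h2 := natDegree_eq_zero_of_derivative_eq_zero h
    omega
  -- Part 2: roots of S
  have hSroots : ∀ s ∈ S.roots, s ∈ K := by
    by_contra hcon
    push_neg at hcon
    obtain ⟨x, hxroots, hxK⟩ := hcon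
    set F : Finset ℂ := (Finset.image ζ Finset.univ) ∪ S.roots.toFinset with hFdef
    have hxF : x ∈ F := by
      rw [hFdef]
      exact Finset.mem_union_right _ (Multiset.mem_toFinset.mpr hxroots)
    obtain ⟨e, heF, hemax⟩ := F.exists_max_image (fun z => Metric.infDist z K) ⟨x, hxF⟩
    have hxpos : 0 < Metric.infDist x K := (hKclosed.notMem_iff_infDist_pos hKne).mp hxK
    have heK : e ∉ K := by
      intro heK
      have h2 := hemax x hxF
      rw [Metric.infDist_zero_of_mem heK] at h2
      linarith
    have henotζ : ∀ l, e ≠ ζ l := fun l h => heK (h ▸ hζK l)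
    have heroot : S.IsRoot e := by
      rw [hFdef] at heF
      rcases Finset.mem_union.mp heF with h | h
      · obtain ⟨l, _, hl⟩ := Finset.mem_image.mp h
        exact absurd (hl ▸ hζK l) heK
      · exact isRoot_of_mem_roots (Multiset.mem_toFinset.mp h)
    -- multiplicity is 1
    have hmpos : 0 < rootMultiplicity e S := (rootMultiplicity_pos hS0).mpr heroot
    have hXCprime := Polynomial.prime_X_sub_C (R := ℂ) e
    have hndvd : ¬ (X - C e) ∣ Q₂ := by
      rw [Polynomial.dvd_iff_isRoot]
      exact fun h => hQ₂ne e henotζ h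
    have hm2 : rootMultiplicity e S < 2 := by
      by_contra h2
      push_neg at h2
      have hmS' : rootMultiplicity e (derivative S) = rootMultiplicity e S - 1 :=
        derivative_rootMultiplicity_of_root heroot
      have hrootS' : (derivative S).IsRoot e := by
        rw [← rootMultiplicity_pos hd, hmS']
        omega
      have hmS'' : rootMultiplicity e (derivative (derivative S))
          = rootMultiplicity e S - 2 := by
        rw [derivative_rootMultiplicity_of_root hrootS', hmS']
        omega
      have hdvd1 : (X - C e) ^ (rootMultiplicity e S - 1) ∣ derivative S := by
        rw [← hmS']
        exact pow_rootMultiplicity_dvd _ _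
      have hdvd2 : (X - C e) ^ (rootMultiplicity e S - 1) ∣ S :=
        dvd_trans (pow_dvd_pow _ (by omega)) (pow_rootMultiplicity_dvd _ _)
      have heqn : Q₂ * derivative (derivative S) = -(Q₁ * derivative S + V * S) := by
        linear_combination heq
      have hdvdR : (X - C e) ^ (rootMultiplicity e S - 1)
          ∣ Q₂ * derivative (derivative S) := by
        rw [heqn]
        exact (dvd_add (hdvd1.mul_left Q₁) (hdvd2.mul_left V)).neg_right
      have hdvdS'' : (X - C e) ^ (rootMultiplicity e S - 1) ∣ derivative (derivative S) :=
        hXCprime.pow_dvd_of_dvd_mul_left _ hndvd hdvdR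
      have hS''ne : derivative (derivative S) ≠ 0 := by
        intro h
        have h3 := natDegree_eq_zero_of_derivative_eq_zero h
        have h4 : derivative S = C ((derivative S).coeff 0) := eq_C_of_natDegree_eq_zero h3
        have h5 : (derivative S).coeff 0 = 0 := by
          have := hrootS'
          rw [h4] at this
          simpa [IsRoot] using this
        rw [h5] at h4
        exact hd (by simpa using h4)
      have hle := (Polynomial.le_rootMultiplicity_iff hS''ne).mpr hdvdS''
      rw [hmS''] at hle
      omega
    have hm1 : rootMultiplicity e S = 1 := by omega
    obtain ⟨T, hT⟩ := (Polynomial.dvd_iff_isRoot).mpr heroot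
    have hT0 : T ≠ 0 := by
      intro h
      rw [h, mul_zero] at hT
      exact hS0 hT
    have hTe : eval e T ≠ 0 := by
      intro h
      obtain ⟨T₂, hT₂⟩ := (Polynomial.dvd_iff_isRoot).mpr h
      have hdvd : (X - C e) ^ 2 ∣ S := ⟨T₂, by rw [hT, hT₂]; ring⟩
      have := (Polynomial.le_rootMultiplicity_iff hS0).mpr hdvd
      omega
    -- derivative evaluations
    have hdT : derivative S = T + (X - C e) * derivative T := by
      rw [hT, derivative_mul]
      simp [derivative_sub, derivative_X, derivative_C]
    have hS'e : eval e (derivative S) = eval e T := by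
      rw [hdT]
      simp
    have hS''e : eval e (derivative (derivative S)) = 2 * eval e (derivative T) := by
      rw [hdT, derivative_add, derivative_mul]
      simp only [derivative_sub, derivative_X, derivative_C, sub_zero, one_mul]
      simp [eval_add, eval_mul]
      ring
    -- evaluate the equation at e
    have h0 := congrArg (eval e) heq
    simp only [eval_add, eval_mul, eval_zero] at h0
    have heS : eval e S = 0 := heroot
    rw [heS, mul_zero, add_zero, hS'e, hS''e] at h0
    -- use derivative formula for T
    have hTform := pkb_eval_derivative T hT0 e hTe
    have hQ1e := hQ1eval e henotζ
    rw [hTform, hQ1e] at h0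
    have hQ2e := hQ₂ne e henotζ
    have hfact : (eval e Q₂ * eval e T) *
        ((2 : ℂ) * (T.roots.map (fun w => (e - w)⁻¹)).sum
          + ∑ l, ((a l : ℂ) * (e - ζ l)⁻¹)) = 0 := by
      rw [← h0]; push_cast; ring
    have hsum0 : (2 : ℂ) * (T.roots.map (fun w => (e - w)⁻¹)).sum
        + ∑ l, ((a l : ℂ) * (e - ζ l)⁻¹) = 0 :=
      (mul_eq_zero.mp hfact).resolve_left (mul_ne_zero hQ2e hTe)
    obtain ⟨u, hupos, humax⟩ := pkb_sep hKconv hKcomp hKne heK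
    apply pkb_pos_sum hp1 ζ a hapos u e (fun l => hupos _ (hζK l)) T.roots ?_ 2 (by norm_num)
    · exact_mod_cast hsum0
    · intro w hw
      have hwS : w ∈ S.roots := Multiset.mem_of_le
        (Polynomial.roots.le_of_dvd hS0 (Dvd.intro_left _ hT.symm)) hw
      have hwF : w ∈ F := Finset.mem_union_right _ (Multiset.mem_toFinset.mpr hwS)
      exact humax w (hemax w hwF)
  -- Part 1: roots of V
  refine ⟨?_, hSroots⟩
  intro v hvroots
  by_contra hvK
  have hV0 : V ≠ 0 := by
    intro h
    rw [h, degree_zero] at hV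
    exact absurd hV.symm (by simp)
  have hvV : eval v V = 0 := isRoot_of_mem_roots hvroots
  have hvnotζ : ∀ l, v ≠ ζ l := fun l h => hvK (h ▸ hζK l)
  have hQ2v := hQ₂ne v hvnotζ
  have hvS : eval v S ≠ 0 := by
    intro h
    exact hvK (hSroots v ((Polynomial.mem_roots hS0).mpr h))
  have h0 := congrArg (eval v) heq
  simp only [eval_add, eval_mul, eval_zero] at h0
  rw [hvV, zero_mul, add_zero] at h0
  by_cases hS'v : eval v (derivative S) = 0
  · exact hvK (pkb_gauss_lucas hd hKconv hKcomp hKne hSroots hS'v)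
  · have hS''form := pkb_eval_derivative (derivative S) hd v hS'v
    have hQ1v := hQ1eval v hvnotζ
    rw [hS''form, hQ1v] at h0
    have hfact : (eval v Q₂ * eval v (derivative S)) *
        (((derivative S).roots.map (fun w => (v - w)⁻¹)).sum
          + ∑ l, ((a l : ℂ) * (v - ζ l)⁻¹)) = 0 := by
      rw [← h0]; ring
    have hsum0 : ((derivative S).roots.map (fun w => (v - w)⁻¹)).sum
        + ∑ l, ((a l : ℂ) * (v - ζ l)⁻¹) = 0 :=
      (mul_eq_zero.mp hfact).resolve_left (mul_ne_zero hQ2v hS'v)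
    obtain ⟨u, hupos, _⟩ := pkb_sep hKconv hKcomp hKne hvK
    apply pkb_pos_sum hp1 ζ a hapos u v (fun l => hupos _ (hζK l))
      (derivative S).roots ?_ 1 (by norm_num)
    · rw [← hsum0]; push_cast; ring
    · intro w hw
      have hwK : w ∈ K :=
        pkb_gauss_lucas hd hKconv hKcomp hKne hSroots (isRoot_of_mem_roots hw)
      exact (hupos w hwK).le
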